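/- Let V be a nonempty finite type with an acyclic edge relation E and pre-level function pℓ. If pℓ is injective, then every stable level function on (V, E) is equal to pℓ; that is, the pre-level function is the only stable level function. (This is the claim in §2.3 of the paper: 'If the pre-level function is injective, it is the only level function on T', under the standing convention that leveled trees are stable.) -/
import Mathlib


/-- A level function on a directed graph `(V, E)`: it takes values `≥ 1`, takes the
value `1` only at `E`-sources (vertices with no `E`-predecessor), and increases
strictly along edges. -/
def IsLevelFunction {V : Type*} (E : V → V → Prop) (ℓ : V → ℕ) : Prop :=
  (∀ v, 1 ≤ ℓ v) ∧ (∀ v, ℓ v = 1 → ∀ u, ¬ E u v) ∧ ∀ v w, E v w → ℓ v + 1 ≤ ℓ w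

/-- The defining recursion of the pre-level function: `pl v = 1` if `v` is an
`E`-source, and `pl v = 1 + max {pl u : E u v}` otherwise (the `max` over the empty
set being `0`). -/
def IsPreLevel {V : Type*} [Fintype V] (E : V → V → Prop) [DecidableRel E]
    (pl : V → ℕ) : Prop :=
  ∀ v, pl v = 1 + Finset.univ.sup fun u => if E u v then pl u else 0

/-- A function `ℓ : V → ℕ` is stable if every level `j` with `1 ≤ j ≤ max ℓ` is
attained. -/
def IsStable {V : Type*} [Fintype V] (ℓ : V → ℕ) : Prop :=
  ∀ j, 1 ≤ j → j ≤ Finset.univ.sup ℓ → ∃ v, ℓ v = j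

/-- If the pre-level function of a nonempty finite acyclic directed graph is injective,
then it is the only stable level function. -/
theorem stable_level_function_eq_preLevel_of_injective
    {V : Type*} [Fintype V] [Nonempty V] (E : V → V → Prop) [DecidableRel E]
    (hacyc : Irreflexive (Relation.TransGen E))
    (pl : V → ℕ) (hpl : IsPreLevel E pl) (hinj : Function.Injective pl)
    (ℓ : V → ℕ) (hℓ : IsLevelFunction E ℓ) (hst : IsStable ℓ) :
    ℓ = pl := by
  classical
  obtain ⟨hℓ1, hℓsrc, hℓmono⟩ := hℓ
  -- E is well-founded on a finite acyclic graph
  have htrans : IsTrans V (Relation.TransGen E) :=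
    ⟨fun _ _ _ h1 h2 => Relation.TransGen.trans h1 h2⟩
  have hirr : IsIrrefl V (Relation.TransGen E) := ⟨hacyc⟩
  have hwf : WellFounded E :=
    Subrelation.wf (fun h => Relation.TransGen.single h)
      (Finite.wellFounded_of_trans_of_irrefl _)
  -- pl is dominated by ℓ
  have hle : ∀ v, pl v ≤ ℓ v := by
    intro v
    induction v using hwf.induction with
    | _ v ih =>
      have hsup : (Finset.univ.sup fun u => if E u v then pl u else 0) ≤ ℓ v - 1 := by
        apply Finset.sup_le
        intro u _
        by_cases h : E u v
        · have h1 := hℓmono u v h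
          have h2 := ih u h
          simp only [h, if_true]
          omega
        · simp [h]
      have h3 := hℓ1 v
      rw [hpl v]
      omega
  set n := Fintype.card V with hn
  -- since pl is injective and takes values in [1, sup pl], we get n ≤ sup pl
  have hplsup : Finset.univ.image pl ⊆ Finset.Icc 1 (Finset.univ.sup pl) := by
    intro j hj
    obtain ⟨v, -, rfl⟩ := Finset.mem_image.1 hj
    refine Finset.mem_Icc.2 ⟨?_, Finset.le_sup (Finset.mem_univ v)⟩
    rw [hpl v]; omega
  have h1 : n ≤ Finset.univ.sup pl := by
    have hc := Finset.card_le_card hplsup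
    rw [Finset.card_image_of_injective _ hinj, Finset.card_univ, Nat.card_Icc] at hc
    omega
  -- sup pl ≤ sup ℓ
  have h2 : Finset.univ.sup pl ≤ Finset.univ.sup ℓ :=
    Finset.sup_mono_fun (fun v _ => hle v)
  -- stability forces sup ℓ ≤ n
  have hsub : Finset.Icc 1 (Finset.univ.sup ℓ) ⊆ Finset.univ.image ℓ := by
    intro j hj
    obtain ⟨hj1, hj2⟩ := Finset.mem_Icc.1 hj
    obtain ⟨v, hv⟩ := hst j hj1 hj2
    exact Finset.mem_image.2 ⟨v, Finset.mem_univ v, hv⟩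
  have h3 : Finset.univ.sup ℓ ≤ n := by
    have hc := Finset.card_le_card hsub
    have hc2 := Finset.card_image_le (s := (Finset.univ : Finset V)) (f := ℓ)
    rw [Nat.card_Icc] at hc
    rw [Finset.card_univ] at hc2
    omega
  have hsupℓ : Finset.univ.sup ℓ = n := le_antisymm h3 (le_trans (le_trans h1 h2) le_rfl)
  have hsuppl : Finset.univ.sup pl = n := le_antisymm (hsupℓ ▸ h2) h1
  -- image of pl is exactly Icc 1 n
  have himgpl : Finset.univ.image pl = Finset.Icc 1 n := by
    refine Finset.eq_of_subset_of_card_le (hsuppl ▸ hplsup) ?_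
    rw [Finset.card_image_of_injective _ hinj, Finset.card_univ, Nat.card_Icc]
    omega
  -- image of ℓ is exactly Icc 1 n
  have hℓsub : Finset.univ.image ℓ ⊆ Finset.Icc 1 n := by
    intro j hj
    obtain ⟨v, -, rfl⟩ := Finset.mem_image.1 hj
    exact Finset.mem_Icc.2 ⟨hℓ1 v, hsupℓ ▸ Finset.le_sup (Finset.mem_univ v)⟩
  have himgℓ : Finset.univ.image ℓ = Finset.Icc 1 n :=
    le_antisymm hℓsub (hsupℓ ▸ hsub)
  -- ℓ is injective since its image has full cardinality
  have hℓinj : Function.Injective ℓ := by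
    have hcard : (Finset.univ.image ℓ).card = (Finset.univ : Finset V).card := by
      rw [himgℓ, Nat.card_Icc, Finset.card_univ]; omega
    have := Finset.card_image_iff.1 hcard
    intro a b hab
    exact this (Finset.mem_coe.2 (Finset.mem_univ a)) (Finset.mem_coe.2 (Finset.mem_univ b)) hab
  -- equal sums
  have hsum : ∑ v, ℓ v = ∑ v, pl v := by
    have e1 : ∑ j ∈ Finset.univ.image ℓ, j = ∑ v, ℓ v :=
      Finset.sum_image (fun a _ b _ h => hℓinj h)
    have e2 : ∑ j ∈ Finset.univ.image pl, j = ∑ v, pl v :=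
      Finset.sum_image (fun a _ b _ h => hinj h)
    rw [← e1, ← e2, himgℓ, himgpl]
  -- pointwise pl ≤ ℓ with equal sums forces equality
  funext v
  have := (Finset.sum_eq_sum_iff_of_le (fun i _ => hle i)).1 hsum.symm v (Finset.mem_univ v)
  exact this.symm
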